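/- Let F be a differential field of characteristic 0 satisfying the extension property: for every differential algebra S over ℚ with no zero divisors, every differential subalgebra R of S over which S is differentially finitely generated, and every nonzero b ∈ S, there exists a nonzero a ∈ R such that every differential ring homomorphism φ : R → F with φ(a) ≠ 0 extends to a differential ring homomorphism ψ : S → F with ψ(b) ≠ 0. Then for every prime differential ideal 𝒥 of F{y} and every B ∈ F{y} \ 𝒥, there exists α ∈ F such that f(α) = 0 for all f ∈ 𝒥 and B(α) ≠ 0. -/

import Mathlib

open MvPolynomial

/-- The order of a differential polynomial: the largest `r` such that `yᵣ` occurs. -/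
noncomputable def dOrder {F : Type*} [CommSemiring F] (A : MvPolynomial ℕ F) : ℕ :=
  A.vars.sup id

/-- Evaluation of a differential polynomial `A ∈ F{y}` at `α`: substitute `δᵏ α` for `yₖ`. -/
noncomputable def deval {F : Type*} [CommRing F] (δ : Derivation ℤ F F) (α : F)
    (A : MvPolynomial ℕ F) : F :=
  aeval (fun k => (⇑δ)^[k] α) A

noncomputable def quotDerivL {A : Type*} [CommRing A] (δ : Derivation ℤ A A)
    (J : Ideal A) (h : ∀ f ∈ J, δ f ∈ J) : (A ⧸ J) →ₗ[ℤ] (A ⧸ J) :=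
  (Submodule.liftQ (J.restrictScalars ℤ)
      ((Ideal.Quotient.mk J).toAddMonoidHom.toIntLinearMap ∘ₗ (δ : A →ₗ[ℤ] A))
      (fun p hp => by
        simpa [Ideal.Quotient.eq_zero_iff_mem] using h p hp)) ∘ₗ
    (Submodule.Quotient.restrictScalarsEquiv ℤ J).symm.toLinearMap

theorem quotDerivL_mk {A : Type*} [CommRing A] (δ : Derivation ℤ A A)
    (J : Ideal A) (h : ∀ f ∈ J, δ f ∈ J) (p : A) :
    quotDerivL δ J h (Ideal.Quotient.mk J p) = Ideal.Quotient.mk J (δ p) := rfl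

noncomputable def quotDeriv {A : Type*} [CommRing A] (δ : Derivation ℤ A A)
    (J : Ideal A) (h : ∀ f ∈ J, δ f ∈ J) : Derivation ℤ (A ⧸ J) (A ⧸ J) where
  toLinearMap := quotDerivL δ J h
  map_one_eq_zero' := by
    have h1 : (1 : A ⧸ J) = Ideal.Quotient.mk J 1 := rfl
    rw [h1, quotDerivL_mk]; simp
  leibniz' := by
    intro a b
    obtain ⟨p, rfl⟩ := Ideal.Quotient.mk_surjective a
    obtain ⟨q, rfl⟩ := Ideal.Quotient.mk_surjective b
    have hm : Ideal.Quotient.mk J p * Ideal.Quotient.mk J q = Ideal.Quotient.mk J (p * q) := by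
      rw [map_mul]
    rw [hm, quotDerivL_mk, quotDerivL_mk, quotDerivL_mk, Derivation.leibniz]
    simp [smul_eq_mul, map_add, map_mul]

theorem quotDeriv_mk {A : Type*} [CommRing A] (δ : Derivation ℤ A A)
    (J : Ideal A) (h : ∀ f ∈ J, δ f ∈ J) (p : A) :
    quotDeriv δ J h (Ideal.Quotient.mk J p) = Ideal.Quotient.mk J (δ p) := rfl

set_option maxHeartbeats 2000000 in
set_option synthInstance.maxHeartbeats 400000 in
theorem stmt6 {F : Type} [Field F] [CharZero F] (δF : Derivation ℤ F F)
    (hext : ∀ (S : Type) [CommRing S] [Algebra ℚ S] [IsDomain S]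
      (δS : Derivation ℤ S S) (R : Subalgebra ℚ S) (hRδ : ∀ r ∈ R, δS r ∈ R),
      (∃ (n : ℕ) (x : Fin n → S),
        Algebra.adjoin ℚ ((R : Set S) ∪
          {s : S | ∃ (i : Fin n) (k : ℕ), s = (⇑δS)^[k] (x i)}) = ⊤) →
      ∀ b : S, b ≠ 0 →
      ∃ a : R, (a : S) ≠ 0 ∧
        ∀ φ : R →+* F, (∀ r : R, φ ⟨δS r, hRδ r r.2⟩ = δF (φ r)) → φ a ≠ 0 →
          ∃ ψ : S →+* F, (∀ s : S, ψ (δS s) = δF (ψ s)) ∧ (∀ r : R, ψ r = φ r) ∧ ψ b ≠ 0)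
    (δP : Derivation ℤ (MvPolynomial ℕ F) (MvPolynomial ℕ F))
    (hδPC : ∀ a : F, δP (C a) = C (δF a))
    (hδPX : ∀ k : ℕ, δP (X k) = X (k + 1))
    (J : Ideal (MvPolynomial ℕ F)) (hJprime : J.IsPrime) (hJdiff : ∀ f ∈ J, δP f ∈ J)
    (B : MvPolynomial ℕ F) (hB : B ∉ J) :
    ∃ α : F, (∀ f ∈ J, deval δF α f = 0) ∧ deval δF α B ≠ 0 := by
  haveI := hJprime
  let mk : MvPolynomial ℕ F →+* MvPolynomial ℕ F ⧸ J := Ideal.Quotient.mk J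
  let δS : Derivation ℤ (MvPolynomial ℕ F ⧸ J) (MvPolynomial ℕ F ⧸ J) := quotDeriv δP J hJdiff
  have hδSmk : ∀ p, δS (mk p) = mk (δP p) := fun p => rfl
  let g : F →ₐ[ℚ] MvPolynomial ℕ F ⧸ J := (mk.comp (C : F →+* MvPolynomial ℕ F)).toRatAlgHom
  have hg : ∀ c : F, g c = mk (C c) := fun c => rfl
  let R : Subalgebra ℚ (MvPolynomial ℕ F ⧸ J) := g.range
  have hRδ : ∀ r ∈ R, δS r ∈ R := by
    rintro r ⟨c, rfl⟩
    refine ⟨δF c, ?_⟩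
    show mk (C (δF c)) = δS (mk (C c))
    rw [hδSmk, hδPC]
  -- iterates of δS on mk (X 0)
  have hXk : ∀ k : ℕ, (⇑δS)^[k] (mk (X 0)) = mk (X k) := by
    intro k
    induction k with
    | zero => rfl
    | succ k ih =>
      rw [Function.iterate_succ_apply', ih, hδSmk, hδPX]
  have hfg : ∃ (n : ℕ) (x : Fin n → MvPolynomial ℕ F ⧸ J),
      Algebra.adjoin ℚ ((R : Set (MvPolynomial ℕ F ⧸ J)) ∪
        {s | ∃ (i : Fin n) (k : ℕ), s = (⇑δS)^[k] (x i)}) = ⊤ := by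
    refine ⟨1, fun _ => mk (X 0), ?_⟩
    rw [eq_top_iff]
    intro s hs
    clear hs
    obtain ⟨p, rfl⟩ := Ideal.Quotient.mk_surjective s
    induction p using MvPolynomial.induction_on with
    | C c =>
      exact Algebra.subset_adjoin (Or.inl ⟨c, rfl⟩)
    | add p q hp hq =>
      rw [map_add]; exact add_mem hp hq
    | mul_X p n hp =>
      rw [map_mul]
      exact mul_mem hp (Algebra.subset_adjoin (Or.inr ⟨0, n, (hXk n).symm⟩))
  have hb : mk B ≠ 0 := fun h => hB (Ideal.Quotient.eq_zero_iff_mem.mp h)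
  obtain ⟨a, ha, H⟩ := hext (MvPolynomial ℕ F ⧸ J) δS R hRδ hfg (mk B) hb
  -- the inverse isomorphism φ : R → F
  have ginj : Function.Injective g := by
    intro c d h
    by_contra hcd
    have : g (c - d) = 0 := by rw [map_sub, h, sub_self]
    have hmem : C (c - d) ∈ J := by
      rw [hg] at this
      exact Ideal.Quotient.eq_zero_iff_mem.mp this
    have hne : c - d ≠ 0 := sub_ne_zero_of_ne hcd
    have h1 : (1 : MvPolynomial ℕ F) ∈ J := by
      have := J.mul_mem_left (C (c - d)⁻¹) hmem
      rwa [← map_mul, inv_mul_cancel₀ hne, map_one] at this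
    exact hJprime.ne_top (J.eq_top_iff_one.mpr h1)
  let e : F ≃ₐ[ℚ] R := AlgEquiv.ofInjective g ginj
  let φ : R →+* F := (e.symm : R →ₐ[ℚ] F).toRingHom
  have hφg : ∀ (c : F) (h : g c ∈ R), φ ⟨g c, h⟩ = c := by
    intro c h
    have : (⟨g c, h⟩ : R) = e c := Subtype.ext (AlgEquiv.ofInjective_apply g ginj c).symm
    rw [this]
    exact e.symm_apply_apply c
  have hφd : ∀ r : R, φ ⟨δS r, hRδ r r.2⟩ = δF (φ r) := by
    intro r
    obtain ⟨c, hc⟩ := r.2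
    have hr : r = ⟨g c, g.mem_range_self c⟩ := Subtype.ext hc.symm
    subst hr
    have hδ : δS (g c) = g (δF c) := by rw [hg, hg, hδSmk, hδPC]
    have h2 : (⟨δS (g c), hRδ _ (g.mem_range_self c)⟩ : R) = ⟨g (δF c), g.mem_range_self (δF c)⟩ := Subtype.ext hδ
    rw [h2, hφg, hφg]
  have hφa : φ a ≠ 0 := by
    intro h0
    apply ha
    have : a = 0 := e.symm.injective (show e.symm a = e.symm 0 by rw [map_zero]; exact h0)
    rw [this]
    exact ZeroMemClass.coe_zero _
  obtain ⟨ψ, hψd, hψr, hψb⟩ := H φ hφd hφa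
  set α := ψ (mk (X 0)) with hα
  have hiter : ∀ (k : ℕ) (s : MvPolynomial ℕ F ⧸ J), ψ ((⇑δS)^[k] s) = (⇑δF)^[k] (ψ s) := by
    intro k
    induction k with
    | zero => intro s; rfl
    | succ k ih =>
      intro s
      rw [Function.iterate_succ_apply', Function.iterate_succ_apply']; exact (hψd _).trans (congrArg _ (ih s))
  have key : ∀ p : MvPolynomial ℕ F, ψ (mk p) = deval δF α p := by
    have : ψ.comp mk
        = ((aeval fun k => (⇑δF)^[k] α : MvPolynomial ℕ F →ₐ[F] F) : MvPolynomial ℕ F →+* F) := by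
      apply MvPolynomial.ringHom_ext
      · intro c
        have h1 : ψ (mk (C c)) = c := by
          have := hψr ⟨g c, g.mem_range_self c⟩
          rw [hφg] at this
          simpa [hg] using this
        simpa using h1
      · intro n
        have h1 : ψ (mk (X n)) = (⇑δF)^[n] α := by
          rw [← hXk n, hiter]
        simpa using h1
    intro p
    have := congrArg (fun f => f p) this
    simpa [deval] using this
  refine ⟨α, fun f hf => ?_, ?_⟩
  · rw [← key, Ideal.Quotient.eq_zero_iff_mem.mpr hf, map_zero]
  · rw [← key]; exact hψb
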